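/- With the relation extensions P₁, …, P_k pairwise disjoint, the repair core equals the intersection of the complements of the participating-tuple sets: Core(D) = ⋂_{i=1}^{k} (D ∖ Rᵢ). -/

import Mathlib

open Classical

variable {α : Type*} [DecidableEq α] {k : ℕ}

/-- The database: the union of the relation extensions `P 1, …, P k`. -/
def DB (P : Fin k → Finset α) : Finset α :=
  Finset.univ.biUnion P

/-- A subset `D'` satisfies the query: there is a witness `f` with
`f i ∈ Pᵢ ∩ D'` for every atom `i`, jointly satisfying the join conditions `W`. -/
def Sat (P : Fin k → Finset α) (W : (Fin k → α) → Prop) (D' : Finset α) : Prop :=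
  ∃ f : Fin k → α, (∀ i, f i ∈ P i ∩ D') ∧ W f

/-- `D'` is an S-repair of the database w.r.t. the denial constraint `¬Q`:
a subset-maximal subset not satisfying the query. -/
def IsSRepair (P : Fin k → Finset α) (W : (Fin k → α) → Prop) (D' : Finset α) : Prop :=
  D' ⊆ DB P ∧ ¬ Sat P W D' ∧ ∀ D'', D'' ⊆ DB P → D' ⊂ D'' → Sat P W D''

/-- The repair core: the intersection of all S-repairs of the database. -/
noncomputable def Core (P : Fin k → Finset α) (W : (Fin k → α) → Prop) : Finset α :=
  (DB P).filter (fun t => ∀ D', IsSRepair P W D' → t ∈ D')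

/-- `Rᵢ`: the tuples of `Pᵢ` participating in some witness of the query. -/
noncomputable def Rset (P : Fin k → Finset α) (W : (Fin k → α) → Prop) (i : Fin k) :
    Finset α :=
  (P i).filter (fun t => ∃ f : Fin k → α, f i = t ∧ (∀ j, f j ∈ P j) ∧ W f)

/-- `S` is a sufficient-set: `S ⊆ D` and `sat(S)`. -/
def SuffSet (P : Fin k → Finset α) (W : (Fin k → α) → Prop) (S : Finset α) : Prop :=
  S ⊆ DB P ∧ Sat P W S

/-- Minimal sufficient-set (MSS). -/
def MSSuff (P : Fin k → Finset α) (W : (Fin k → α) → Prop) (S : Finset α) : Prop :=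
  SuffSet P W S ∧ ∀ S' ⊂ S, ¬ SuffSet P W S'

/-- `N` is a necessary-set: `N ⊆ D` and `¬ sat(D ∖ N)`. -/
def NecSet (P : Fin k → Finset α) (W : (Fin k → α) → Prop) (N : Finset α) : Prop :=
  N ⊆ DB P ∧ ¬ Sat P W (DB P \ N)

/-- Minimal necessary-set (MNS). -/
def MNS (P : Fin k → Finset α) (W : (Fin k → α) → Prop) (N : Finset α) : Prop :=
  NecSet P W N ∧ ∀ N' ⊂ N, ¬ NecSet P W N'

lemma exists_repair_extending (P : Fin k → Finset α) (W : (Fin k → α) → Prop)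
    (X : Finset α) (hX : X ⊆ DB P) (hns : ¬ Sat P W X) :
    ∃ D', IsSRepair P W D' ∧ X ⊆ D' := by
  classical
  set s : Finset (Finset α) :=
    (DB P).powerset.filter (fun D'' => X ⊆ D'' ∧ ¬ Sat P W D'') with hs
  have hXs : X ∈ s := by
    simp [hs, Finset.mem_powerset, hX, hns]
  obtain ⟨D', hD's, hmax0⟩ := Finset.exists_maximal (s := s) ⟨X, hXs⟩
  have hmax : ∀ x ∈ s, ¬ D' < x := fun x hx hlt => hlt.not_ge (hmax0 hx hlt.le)
  simp only [hs, Finset.mem_filter, Finset.mem_powerset] at hD's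
  refine ⟨D', ⟨hD's.1, hD's.2.2, ?_⟩, hD's.2.1⟩
  intro D'' hD''sub hlt
  by_contra hnsat
  exact hmax D'' (by simp [hs, Finset.mem_filter, Finset.mem_powerset, hD''sub,
    hD's.2.1.trans hlt.subset, hnsat]) hlt

theorem stmt8 (hk : 1 ≤ k) (P : Fin k → Finset α)
    (hdisj : ∀ i j : Fin k, i ≠ j → Disjoint (P i) (P j))
    (W : (Fin k → α) → Prop) (hD : Sat P W (DB P)) :
    Core P W =
      Finset.univ.inf' (Finset.univ_nonempty_iff.mpr ⟨⟨0, hk⟩⟩)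
        (fun i => DB P \ Rset P W i) := by
  classical
  ext t
  simp only [Finset.mem_inf', Finset.mem_univ, forall_true_left, Finset.mem_sdiff,
    Core, Finset.mem_filter]
  constructor
  · rintro ⟨htD, hall⟩
    intro i
    refine ⟨htD, ?_⟩
    intro htR
    rw [Rset, Finset.mem_filter] at htR
    obtain ⟨htPi, f, hfi, hfP, hfW⟩ := htR
    -- build X = range f minus t, not satisfying
    set X : Finset α := (Finset.univ.image f).erase t with hXdef
    have hXsub : X ⊆ DB P := by
      intro x hx
      rw [hXdef, Finset.mem_erase, Finset.mem_image] at hx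
      obtain ⟨_, j, _, rfl⟩ := hx
      exact Finset.mem_biUnion.mpr ⟨j, Finset.mem_univ j, hfP j⟩
    have hfne : ∀ j : Fin k, j ≠ i → f j ≠ t := by
      intro j hj hft
      have : f j ∈ P i := hft ▸ htPi
      exact Finset.disjoint_left.mp (hdisj j i hj) (hfP j) this
    have hXns : ¬ Sat P W X := by
      rintro ⟨g, hg, -⟩
      have hgi := hg i
      rw [Finset.mem_inter, hXdef, Finset.mem_erase, Finset.mem_image] at hgi
      obtain ⟨hgPi, hgne, j, -, hgj⟩ := hgi
      by_cases hji : j = i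
      · subst hji; exact hgne (hgj ▸ hfi)
      · have : f j ∈ P i ∩ X := hgj ▸ hg i
        exact Finset.disjoint_left.mp (hdisj j i hji) (hfP j)
          (Finset.mem_inter.mp this).1
    obtain ⟨D', hrep, hXD'⟩ := exists_repair_extending P W X hXsub hXns
    have htD' : t ∈ D' := hall D' hrep
    -- then Sat D' via f, contradiction
    apply hrep.2.1
    refine ⟨f, fun j => Finset.mem_inter.mpr ⟨hfP j, ?_⟩, hfW⟩
    by_cases hji : j = i
    · subst hji; exact hfi ▸ htD'
    · exact hXD' (by
        rw [hXdef, Finset.mem_erase]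
        exact ⟨hfne j hji, Finset.mem_image.mpr ⟨j, Finset.mem_univ j, rfl⟩⟩)
  · intro h
    have htD : t ∈ DB P := (h ⟨0, hk⟩).1
    refine ⟨htD, ?_⟩
    intro D' hrep
    by_contra htD'
    have hins : Sat P W (insert t D') := by
      apply hrep.2.2 (insert t D')
      · intro x hx
        rcases Finset.mem_insert.mp hx with rfl | hx
        · exact htD
        · exact hrep.1 hx
      · exact Finset.ssubset_insert htD'
    obtain ⟨f, hf, hfW⟩ := hins
    by_cases hex : ∃ i, f i = t
    · obtain ⟨i, hfi⟩ := hex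
      exact (h i).2 (by
        rw [Rset, Finset.mem_filter]
        exact ⟨hfi ▸ (Finset.mem_inter.mp (hf i)).1, f, hfi, fun j => (Finset.mem_inter.mp (hf j)).1, hfW⟩)
    · push_neg at hex
      apply hrep.2.1
      refine ⟨f, fun j => Finset.mem_inter.mpr ⟨(Finset.mem_inter.mp (hf j)).1, ?_⟩, hfW⟩
      rcases Finset.mem_insert.mp (Finset.mem_inter.mp (hf j)).2 with h' | h'
      · exact absurd h' (hex j)
      · exact h'
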